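/- Let Q : 𝔻 → [0,∞] be measurable on the unit disk 𝔻 ⊂ ℂ and Φ : [0,∞] → [0,∞] a non-decreasing convex function. Let q(r) = (1/2π)∫₀^{2π} Q(r e^{iθ}) dθ be the circular average of Q and N = ∫_𝔻 Φ(Q(z)) dxdy. Then ∫₀¹ dr/(r q(r)) ≥ (1/2) ∫_N^∞ dτ/(τ Φ⁻¹(τ)), where Φ⁻¹(τ) = inf { t : Φ(t) ≥ τ }. -/

import Mathlib

open ENNReal MeasureTheory Set Real

/-- The generalized inverse of a non-decreasing `Φ : [0,∞] → [0,∞]`: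
`Φ⁻¹(τ) = inf { t : Φ(t) ≥ τ }`, with `inf ∅ = ∞`. -/
noncomputable def incInv (Φ : ℝ≥0∞ → ℝ≥0∞) (τ : ℝ≥0∞) : ℝ≥0∞ :=
  sInf {t : ℝ≥0∞ | τ ≤ Φ t}



lemma vol_aux (c : ℝ≥0∞) : volume ({t : ℝ | ENNReal.ofReal t < c} ∩ Ioi (0:ℝ)) = c := by
  rcases eq_or_ne c ∞ with rfl | hc
  · have : {t : ℝ | ENNReal.ofReal t < ∞} = univ := by
      ext t; simp [ENNReal.ofReal_lt_top]
    rw [this, univ_inter, Real.volume_Ioi]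
  · have : {t : ℝ | ENNReal.ofReal t < c} ∩ Ioi (0:ℝ) = Ioo 0 c.toReal := by
      ext t
      simp only [mem_inter_iff, mem_setOf_eq, mem_Ioi, mem_Ioo]
      constructor
      · rintro ⟨h1, h2⟩
        exact ⟨h2, by rwa [← ENNReal.ofReal_lt_iff_lt_toReal h2.le hc]⟩
      · rintro ⟨h1, h2⟩
        exact ⟨by rwa [ENNReal.ofReal_lt_iff_lt_toReal h1.le hc], h1⟩
    rw [this, Real.volume_Ioo, sub_zero, ENNReal.ofReal_toReal hc]

lemma lintegral_image_eq_lintegral_abs_deriv_smul' {s : Set ℝ} {f : ℝ → ℝ} {f' : ℝ → ℝ}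
    (hs : MeasurableSet s) (hf' : ∀ x ∈ s, HasDerivWithinAt f (f' x) s x)
    (hf : InjOn f s) (g : ℝ → ℝ≥0∞) :
    ∫⁻ x in f '' s, g x = ∫⁻ x in s, ENNReal.ofReal |f' x| * g (f x) := by
  simpa only [ContinuousLinearMap.det_toSpanSingleton] using
    lintegral_image_eq_lintegral_abs_det_fderiv_mul volume hs
      (fun x hx => (hf' x hx).hasFDerivWithinAt) hf g

lemma lintegral_comp_polarCoord_symm' (f : ℝ × ℝ → ℝ≥0∞) :
    ∫⁻ p in polarCoord.target, ENNReal.ofReal p.1 * f (polarCoord.symm p) = ∫⁻ p, f p := by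
  set B : ℝ × ℝ → ℝ × ℝ →L[ℝ] ℝ × ℝ := fun p =>
    LinearMap.toContinuousLinearMap (Matrix.toLin (Module.Basis.finTwoProd ℝ) (Module.Basis.finTwoProd ℝ)
      !![Real.cos p.2, -p.1 * Real.sin p.2; Real.sin p.2, p.1 * Real.cos p.2])
  have A : ∀ p ∈ polarCoord.target, HasFDerivWithinAt polarCoord.symm (B p) polarCoord.target p :=
    fun p _ => (hasFDerivAt_polarCoord_symm p).hasFDerivWithinAt
  have B_det : ∀ p, (B p).det = p.1 := by
    intro p
    conv_rhs => rw [← one_mul p.1, ← cos_sq_add_sin_sq p.2]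
    simp only [B, neg_mul, LinearMap.det_toContinuousLinearMap, LinearMap.det_toLin,
      Matrix.det_fin_two_of, sub_neg_eq_add]
    ring
  have hinj : InjOn polarCoord.symm polarCoord.target := polarCoord.symm.injOn
  have himg : polarCoord.symm '' polarCoord.target = polarCoord.source :=
    polarCoord.symm_image_target_eq_source
  calc
    ∫⁻ p in polarCoord.target, ENNReal.ofReal p.1 * f (polarCoord.symm p)
        = ∫⁻ p in polarCoord.target, ENNReal.ofReal |(B p).det| * f (polarCoord.symm p) := by
      refine setLIntegral_congr_fun polarCoord.open_target.measurableSet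
        (fun p hp => ?_)
      rw [B_det, abs_of_pos hp.1]
    _ = ∫⁻ p in polarCoord.symm '' polarCoord.target, f p :=
      (lintegral_image_eq_lintegral_abs_det_fderiv_mul volume
        polarCoord.open_target.measurableSet A hinj f).symm
    _ = ∫⁻ p in polarCoord.source, f p := by rw [himg]
    _ = ∫⁻ p, f p := by
      exact (setLIntegral_congr polarCoord_source_ae_eq_univ).trans (setLIntegral_univ f)



lemma lintegral_Ioo_split (f : ℝ → ℝ≥0∞) (a c b : ℝ) (h1 : a < c) (h2 : c < b) :
    ∫⁻ x in Ioo a b, f x = (∫⁻ x in Ioo a c, f x) + ∫⁻ x in Ioo c b, f x := by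
  have key := lintegral_inter_add_diff (μ := volume) f (Ioo a b) (measurableSet_Ioo (a := a) (b := c))
  have e1 : Ioo a b ∩ Ioo a c = Ioo a c := by
    apply inter_eq_right.2
    exact Ioo_subset_Ioo le_rfl h2.le
  have e2 : Ioo a b \ Ioo a c = Ico c b := by
    ext x
    simp only [mem_diff, mem_Ioo, mem_Ico, not_and, not_lt]
    constructor
    · rintro ⟨⟨hx1, hx2⟩, hx3⟩
      exact ⟨hx3 hx1, hx2⟩
    · rintro ⟨hx1, hx2⟩
      exact ⟨⟨h1.trans_le hx1, hx2⟩, fun _ => hx1⟩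
  have e3 : ∫⁻ x in Ico c b, f x = ∫⁻ x in Ioo c b, f x := by
    rw [Measure.restrict_congr_set (Ioo_ae_eq_Ico (a := c) (b := b)).symm]
  rw [e1, e2, e3] at key
  exact key.symm

lemma lintegral_shift_Ioo (F : ℝ → ℝ≥0∞) (hF : Measurable F)
    (hper : ∀ x : ℝ, F (x + 2 * π) = F x) :
    ∫⁻ x in Ioo (-π) π, F x = ∫⁻ x in Ioo 0 (2 * π), F x := by
  have h1 : ∫⁻ x in Ioo π (2 * π), F x = ∫⁻ x in Ioo (-π) 0, F x := by
    have hmap : Measure.map (· + (2 * π)) volume = volume :=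
      map_add_right_eq_self volume (2 * π)
    have hpre : (· + (2 * π)) ⁻¹' Ioo π (2 * π) = Ioo (-π) 0 := by
      rw [preimage_add_const_Ioo]
      norm_num
      ring_nf
    calc ∫⁻ x in Ioo π (2 * π), F x
        = ∫⁻ x in Ioo π (2 * π), F x ∂(Measure.map (· + (2 * π)) volume) := by rw [hmap]
      _ = ∫⁻ x in (· + (2 * π)) ⁻¹' Ioo π (2 * π), F (x + 2 * π) :=
          setLIntegral_map measurableSet_Ioo hF (measurable_add_const _)
      _ = ∫⁻ x in Ioo (-π) 0, F x := by
          rw [hpre]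
          exact setLIntegral_congr_fun measurableSet_Ioo
            (fun x _ => hper x)
  rw [lintegral_Ioo_split F (-π) 0 π (by linarith [Real.pi_pos]) Real.pi_pos,
    lintegral_Ioo_split F 0 π (2 * π) Real.pi_pos (by linarith [Real.pi_pos]),
    ← h1, add_comm]



lemma polar_ball (h : ℂ → ℝ≥0∞) (hh : Measurable h) :
    (∫⁻ r in Ioo (0:ℝ) 1, ENNReal.ofReal r *
        ∫⁻ θ in Ioo (0:ℝ) (2 * π), h ((r : ℂ) * Complex.exp (θ * Complex.I)))
      = ∫⁻ z in Metric.ball (0:ℂ) 1, h z := by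
  have habs : ∀ (r θ : ℝ), ‖(r : ℂ) * Complex.exp (θ * Complex.I)‖ = |r| := by
    intro r θ
    simp [Complex.norm_exp_ofReal_mul_I]
  set hind : ℂ → ℝ≥0∞ := (Metric.ball (0:ℂ) 1).indicator h with hind_def
  have hindm : Measurable hind := hh.indicator measurableSet_ball
  set f : ℝ × ℝ → ℝ≥0∞ := fun p => hind (Complex.measurableEquivRealProd.symm p) with hf_def
  have hfm : Measurable f := hindm.comp Complex.measurableEquivRealProd.symm.measurable
  have key := lintegral_comp_polarCoord_symm' f
  have hRHS : ∫⁻ p, f p = ∫⁻ z in Metric.ball (0:ℂ) 1, h z := by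
    calc ∫⁻ p, f p
        = ∫⁻ z, hind z := by
          rw [← (Complex.volume_preserving_equiv_real_prod.symm _).map_eq,
            lintegral_map hindm Complex.measurableEquivRealProd.symm.measurable]
      _ = ∫⁻ z in Metric.ball (0:ℂ) 1, h z := lintegral_indicator measurableSet_ball h
  have hsymm : ∀ p : ℝ × ℝ, Complex.measurableEquivRealProd.symm (polarCoord.symm p)
      = (p.1 : ℂ) * Complex.exp (p.2 * Complex.I) := by
    intro p
    rw [Complex.exp_mul_I, ← Complex.ofReal_cos, ← Complex.ofReal_sin,
      Complex.measurableEquivRealProd_symm_apply, polarCoord_symm_apply]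
    apply Complex.ext <;> simp [Complex.cos_ofReal_re, Complex.sin_ofReal_re]
  have hTmeas : MeasurableSet polarCoord.target :=
    polarCoord.open_target.measurableSet
  have hSmeas : MeasurableSet (Ioo (0:ℝ) 1 ×ˢ (univ : Set ℝ)) :=
    measurableSet_Ioo.prod MeasurableSet.univ
  have hsplit := lintegral_inter_add_diff (μ := volume)
    (fun p => ENNReal.ofReal p.1 * f (polarCoord.symm p)) polarCoord.target hSmeas
  have hz : ∫⁻ p in polarCoord.target \ (Ioo (0:ℝ) 1 ×ˢ (univ : Set ℝ)),
      ENNReal.ofReal p.1 * f (polarCoord.symm p) = 0 := by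
    have hpt : ∀ p ∈ polarCoord.target \ (Ioo (0:ℝ) 1 ×ˢ (univ : Set ℝ)),
        ENNReal.ofReal p.1 * f (polarCoord.symm p) = (0:ℝ≥0∞) := by
      intro p hp
      have h1 : (0:ℝ) < p.1 := hp.1.1
      have h2 : (1:ℝ) ≤ p.1 := by
        by_contra hcon
        exact hp.2 ⟨⟨h1, lt_of_not_ge hcon⟩, mem_univ _⟩
      have hz0 : f (polarCoord.symm p) = 0 := by
        show hind (Complex.measurableEquivRealProd.symm (polarCoord.symm p)) = 0
        rw [hsymm p]
        apply indicator_of_notMem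
        simp only [Metric.mem_ball, dist_zero_right, habs, not_lt]
        rw [abs_of_pos h1]; exact h2
      rw [hz0, mul_zero]
    rw [setLIntegral_congr_fun (hTmeas.diff hSmeas) hpt]
    exact lintegral_zero
  have hTS : polarCoord.target ∩ (Ioo (0:ℝ) 1 ×ˢ (univ : Set ℝ))
      = Ioo (0:ℝ) 1 ×ˢ Ioo (-π) π := by
    rw [polarCoord_target]
    ext p
    simp only [mem_inter_iff, mem_prod, mem_Ioi, mem_Ioo, mem_univ, and_true]
    tauto
  rw [hTS, hz, add_zero] at hsplit
  -- now iterated integral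
  have hprod : ∫⁻ p in Ioo (0:ℝ) 1 ×ˢ Ioo (-π) π,
      ENNReal.ofReal p.1 * f (polarCoord.symm p)
      = ∫⁻ r in Ioo (0:ℝ) 1, ∫⁻ θ in Ioo (-π) π,
          ENNReal.ofReal r * hind ((r : ℂ) * Complex.exp (θ * Complex.I)) := by
    have hps : Measurable (polarCoord.symm : ℝ × ℝ → ℝ × ℝ) := by
      have heq : (polarCoord.symm : ℝ × ℝ → ℝ × ℝ)
          = fun p => (p.1 * Real.cos p.2, p.1 * Real.sin p.2) := by
        funext p; exact polarCoord_symm_apply p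
      rw [heq]
      exact ((continuous_fst.mul (Real.continuous_cos.comp continuous_snd)).prodMk
        (continuous_fst.mul (Real.continuous_sin.comp continuous_snd))).measurable
    rw [Measure.volume_eq_prod, ← Measure.prod_restrict,
      lintegral_prod (fun p => ENNReal.ofReal p.1 * f (polarCoord.symm p))
        (((measurable_ofReal.comp measurable_fst).mul (hfm.comp hps)).aemeasurable)]
    apply lintegral_congr (fun r => lintegral_congr (fun θ => ?_))
    simp only [hf_def, hsymm]
  have hshift : ∀ r : ℝ, ∫⁻ θ in Ioo (-π) π,
        ENNReal.ofReal r * hind ((r : ℂ) * Complex.exp (θ * Complex.I))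
      = ∫⁻ θ in Ioo (0:ℝ) (2*π),
        ENNReal.ofReal r * hind ((r : ℂ) * Complex.exp (θ * Complex.I)) := by
    intro r
    apply lintegral_shift_Ioo
    · apply (measurable_const.mul (hindm.comp ?_))
      apply Measurable.mul measurable_const
      exact Complex.measurable_exp.comp (Complex.measurable_ofReal.mul measurable_const)
    · intro x
      have : Complex.exp ((↑(x + 2*π)) * Complex.I) = Complex.exp ((x:ℝ) * Complex.I) := by
        push_cast
        rw [add_mul, Complex.exp_add, Complex.exp_two_pi_mul_I, mul_one]
      rw [this]
  have hfin : ∀ r ∈ Ioo (0:ℝ) 1, (∫⁻ θ in Ioo (0:ℝ) (2*π),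
        ENNReal.ofReal r * hind ((r : ℂ) * Complex.exp (θ * Complex.I)))
      = ENNReal.ofReal r * ∫⁻ θ in Ioo (0:ℝ) (2*π), h ((r : ℂ) * Complex.exp (θ * Complex.I)) := by
    intro r hr
    have hm : Measurable fun θ : ℝ => hind ((r:ℂ) * Complex.exp ((θ:ℂ) * Complex.I)) :=
      hindm.comp (measurable_const.mul
        (Complex.measurable_exp.comp (Complex.measurable_ofReal.mul measurable_const)))
    rw [lintegral_const_mul _ hm]
    congr 1
    apply lintegral_congr (fun θ => ?_)
    apply indicator_of_mem
    simp only [Metric.mem_ball, dist_zero_right, habs]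
    rw [abs_of_pos hr.1]; exact hr.2
  calc (∫⁻ r in Ioo (0:ℝ) 1, ENNReal.ofReal r *
        ∫⁻ θ in Ioo (0:ℝ) (2 * π), h ((r : ℂ) * Complex.exp (θ * Complex.I)))
      = ∫⁻ r in Ioo (0:ℝ) 1, ∫⁻ θ in Ioo (0:ℝ) (2*π),
          ENNReal.ofReal r * hind ((r : ℂ) * Complex.exp (θ * Complex.I)) :=
        setLIntegral_congr_fun measurableSet_Ioo
          (fun r hr => (hfin r hr).symm)
    _ = ∫⁻ z in Metric.ball (0:ℂ) 1, h z := by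
        beta_reduce at hsplit
        rw [← hRHS, ← key, ← hsplit, hprod]
        apply lintegral_congr (fun r => (hshift r).symm)



section Jensen

variable (Φ : ℝ≥0∞ → ℝ≥0∞)

lemma phi_top (hΦ : Monotone Φ)
    (hconv : ∀ a b t₁ t₂ : ℝ≥0∞, a + b = 1 → Φ (a * t₁ + b * t₂) ≤ a * Φ t₁ + b * Φ t₂)
    (t₁ t : ℝ≥0∞) (h1 : t₁ < t) (h2 : Φ t₁ < Φ t) (h3 : Φ t ≠ ∞) (ht : t ≠ ∞) :
    Φ ∞ = ∞ := by
  by_contra hc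
  set c := Φ ∞ with hc_def
  set ε := Φ t - Φ t₁ with hε_def
  have hεpos : 0 < ε := tsub_pos_of_lt h2
  have hεfin : ε ≠ ∞ := ne_top_of_le_ne_top h3 tsub_le_self
  have hεr : 0 < ε.toReal := ENNReal.toReal_pos hεpos.ne' hεfin
  have hcr : 0 ≤ c.toReal := ENNReal.toReal_nonneg
  set β := min (1:ℝ) (ε.toReal / (2 * (c.toReal + 1))) with hβ_def
  have hβpos : 0 < β := lt_min one_pos (by positivity)
  have hβ1 : β ≤ 1 := min_le_left _ _
  have hβc : ENNReal.ofReal β * c < ε := by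
    have hcfin : c ≠ ∞ := hc
    calc ENNReal.ofReal β * c = ENNReal.ofReal β * ENNReal.ofReal c.toReal := by
          rw [ENNReal.ofReal_toReal hcfin]
      _ = ENNReal.ofReal (β * c.toReal) := (ENNReal.ofReal_mul hβpos.le).symm
      _ < ENNReal.ofReal ε.toReal := by
          apply (ENNReal.ofReal_lt_ofReal_iff hεr).2
          have hβ2 : β ≤ ε.toReal / (2 * (c.toReal + 1)) := min_le_right _ _
          calc β * c.toReal ≤ ε.toReal / (2 * (c.toReal + 1)) * c.toReal :=
              mul_le_mul_of_nonneg_right hβ2 hcr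
            _ < ε.toReal := by
                rw [div_mul_eq_mul_div, div_lt_iff₀ (by positivity)]
                nlinarith
      _ = ε := ENNReal.ofReal_toReal hεfin
  have ht₁fin : t₁ ≠ ∞ := h1.ne_top
  set u := t₁.toReal with hu_def
  set v := t.toReal with hv_def
  have hu0 : 0 ≤ u := ENNReal.toReal_nonneg
  have huv : u < v := (ENNReal.toReal_lt_toReal ht₁fin ht).2 h1
  set X := u + (v - u) / β with hX_def
  have hX0 : 0 ≤ X := by
    have : 0 ≤ (v - u) / β := div_nonneg (by linarith) hβpos.le
    simp only [hX_def]; linarith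
  have hcombo : ENNReal.ofReal (1 - β) * ENNReal.ofReal u + ENNReal.ofReal β * ENNReal.ofReal X
      = t := by
    rw [← ENNReal.ofReal_mul (by linarith), ← ENNReal.ofReal_mul hβpos.le,
      ← ENNReal.ofReal_add (mul_nonneg (by linarith) hu0) (mul_nonneg hβpos.le hX0)]
    have hXv : (1 - β) * u + β * X = v := by
      rw [hX_def]
      field_simp
      ring
    rw [hXv, ENNReal.ofReal_toReal ht]
  have hsum : ENNReal.ofReal (1 - β) + ENNReal.ofReal β = 1 := by
    rw [← ENNReal.ofReal_add (by linarith) hβpos.le]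
    norm_num
  have hkey := hconv (ENNReal.ofReal (1 - β)) (ENNReal.ofReal β)
    (ENNReal.ofReal u) (ENNReal.ofReal X) hsum
  rw [hcombo] at hkey
  have ht₁eq : ENNReal.ofReal u = t₁ := ENNReal.ofReal_toReal ht₁fin
  rw [ht₁eq] at hkey
  have hΦt₁fin : Φ t₁ ≠ ∞ := (h2.trans_le le_top).ne_top
  have hfinal : Φ t < Φ t := by
    calc Φ t ≤ ENNReal.ofReal (1 - β) * Φ t₁ + ENNReal.ofReal β * Φ (ENNReal.ofReal X) := hkey
      _ ≤ Φ t₁ + ENNReal.ofReal β * c := by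
          apply add_le_add
          · calc ENNReal.ofReal (1 - β) * Φ t₁ ≤ 1 * Φ t₁ :=
                mul_le_mul_left (ENNReal.ofReal_le_one.2 (by linarith)) _
              _ = Φ t₁ := one_mul _
          · exact mul_le_mul_right (hΦ le_top) _
      _ < Φ t₁ + ε := ENNReal.add_lt_add_left hΦt₁fin hβc
      _ = Φ t := by rw [hε_def, add_tsub_cancel_of_le h2.le]
  exact lt_irrefl _ hfinal

lemma jensen_side (hΦ : Monotone Φ)
    (hconv : ∀ a b t₁ t₂ : ℝ≥0∞, a + b = 1 → Φ (a * t₁ + b * t₂) ≤ a * Φ t₁ + b * Φ t₂)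
    {α : Type*} [MeasurableSpace α] (μ : Measure α) [IsProbabilityMeasure μ]
    (f : α → ℝ≥0∞) (hf : Measurable f) (t : ℝ≥0∞) (ht : t < ∫⁻ a, f a ∂μ) :
    Φ t ≤ ∫⁻ a, Φ (f a) ∂μ := by
  have htfin : t ≠ ∞ := ht.ne_top
  have hpos : 0 < μ {a | t < f a} := by
    by_contra hcon
    push_neg at hcon
    have hz : μ {a | t < f a} = 0 := le_antisymm hcon (zero_le ..)
    have hae : ∀ᵐ a ∂μ, f a ≤ t := by
      rw [ae_iff]
      simpa only [not_le] using hz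
    have hle : ∫⁻ a, f a ∂μ ≤ t := by
      calc ∫⁻ a, f a ∂μ ≤ ∫⁻ _, t ∂μ := lintegral_mono_ae (hae.mono fun a h => h)
        _ = t := by simp [lintegral_const]
    exact absurd ht (not_lt.2 hle)
  have hinf_case : (∀ y : ℝ≥0∞, t < y → Φ y = ∞) → Φ t ≤ ∫⁻ a, Φ (f a) ∂μ := by
    intro H
    have htop : ∫⁻ a, Φ (f a) ∂μ = ∞ := by
      have h1 : ∫⁻ a in {a | t < f a}, Φ (f a) ∂μ ≤ ∫⁻ a, Φ (f a) ∂μ :=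
        setLIntegral_le_lintegral _ _
      have h2 : ∫⁻ a in {a | t < f a}, Φ (f a) ∂μ = ∞ := by
        have hpt : ∀ a ∈ {a | t < f a}, (∞:ℝ≥0∞) ≤ Φ (f a) := fun a ha =>
          le_of_eq (H (f a) ha).symm
        have hmon : ∫⁻ a in {a | t < f a}, (∞:ℝ≥0∞) ∂μ ≤ ∫⁻ a in {a | t < f a}, Φ (f a) ∂μ :=
          setLIntegral_mono (hΦ.measurable.comp hf) hpt
        rw [setLIntegral_const] at hmon
        rw [eq_top_iff]
        exact le_trans (le_of_eq (ENNReal.top_mul hpos.ne').symm) hmon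
      rw [eq_top_iff]
      exact h2 ▸ h1
    rw [htop]
    exact le_top
  by_cases hΦt : Φ t = ∞
  · exact hinf_case fun y hy => eq_top_iff.2 (hΦt ▸ hΦ hy.le)
  by_cases ht0 : t = 0
  · subst ht0
    calc Φ 0 = ∫⁻ _, Φ 0 ∂μ := by simp [lintegral_const]
      _ ≤ ∫⁻ a, Φ (f a) ∂μ := lintegral_mono fun a => hΦ (zero_le ..)
  set tr := t.toReal with htr_def
  have htrpos : 0 < tr := ENNReal.toReal_pos ht0 htfin
  set F : ℝ → ℝ := fun x => (Φ (ENNReal.ofReal x)).toReal with hF_def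
  have hFt : ENNReal.ofReal tr = t := ENNReal.ofReal_toReal htfin
  have hFmono : ∀ x : ℝ, x ≤ tr → Φ (ENNReal.ofReal x) ≠ ∞ := by
    intro x hx
    exact fun habs => hΦt (eq_top_iff.2 (habs ▸ hΦ (hFt ▸ ENNReal.ofReal_le_ofReal hx)))
  have hslope_nonneg : ∀ x : ℝ, 0 ≤ x → x < tr → 0 ≤ (F tr - F x) / (tr - x) := by
    intro x hx0 hxtr
    apply div_nonneg _ (by linarith)
    have hmono : Φ (ENNReal.ofReal x) ≤ Φ (ENNReal.ofReal tr) :=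
      hΦ (ENNReal.ofReal_le_ofReal hxtr.le)
    have h2 : (Φ (ENNReal.ofReal x)).toReal ≤ (Φ (ENNReal.ofReal tr)).toReal :=
      (ENNReal.toReal_le_toReal (hFmono x hxtr.le) (hFmono tr le_rfl)).2 hmono
    show 0 ≤ (Φ (ENNReal.ofReal tr)).toReal - (Φ (ENNReal.ofReal x)).toReal
    linarith
  have hF3 : ∀ x y : ℝ, 0 ≤ x → x < tr → tr < y → Φ (ENNReal.ofReal y) ≠ ∞ →
      (F tr - F x) / (tr - x) ≤ (F y - F tr) / (y - tr) := by
    intro x y hx0 hxtr htry hΦy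
    set a := (y - tr) / (y - x) with ha_def
    set b := (tr - x) / (y - x) with hb_def
    have hyx : 0 < y - x := by linarith
    have ha0 : 0 ≤ a := div_nonneg (by linarith) (by linarith)
    have hb0 : 0 ≤ b := div_nonneg (by linarith) (by linarith)
    have hab : a + b = 1 := by
      rw [ha_def, hb_def]
      field_simp
      ring
    have hsum : ENNReal.ofReal a + ENNReal.ofReal b = 1 := by
      rw [← ENNReal.ofReal_add ha0 hb0, hab, ENNReal.ofReal_one]
    have hcombo : ENNReal.ofReal a * ENNReal.ofReal x + ENNReal.ofReal b * ENNReal.ofReal y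
        = ENNReal.ofReal tr := by
      rw [← ENNReal.ofReal_mul ha0, ← ENNReal.ofReal_mul hb0,
        ← ENNReal.ofReal_add (mul_nonneg ha0 hx0) (mul_nonneg hb0 (by linarith))]
      congr 1
      rw [ha_def, hb_def]
      field_simp
      try ring
    have hkey := hconv (ENNReal.ofReal a) (ENNReal.ofReal b)
      (ENNReal.ofReal x) (ENNReal.ofReal y) hsum
    rw [hcombo] at hkey
    have hfin1 : Φ (ENNReal.ofReal x) ≠ ∞ := hFmono x hxtr.le
    have hfinsum : ENNReal.ofReal a * Φ (ENNReal.ofReal x)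
        + ENNReal.ofReal b * Φ (ENNReal.ofReal y) ≠ ∞ :=
      ENNReal.add_ne_top.2 ⟨ENNReal.mul_ne_top ENNReal.ofReal_ne_top hfin1,
        ENNReal.mul_ne_top ENNReal.ofReal_ne_top hΦy⟩
    have hreal : F tr ≤ a * F x + b * F y := by
      have h1 := (ENNReal.toReal_le_toReal (ne_top_of_le_ne_top hfinsum hkey) hfinsum).2 hkey
      rw [ENNReal.toReal_add (ENNReal.mul_ne_top ENNReal.ofReal_ne_top hfin1)
        (ENNReal.mul_ne_top ENNReal.ofReal_ne_top hΦy), ENNReal.toReal_mul,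
        ENNReal.toReal_mul, ENNReal.toReal_ofReal ha0, ENNReal.toReal_ofReal hb0] at h1
      exact h1
    rw [div_le_div_iff₀ (by linarith) (by linarith)]
    have h2 : F tr * (y - x) ≤ (y - tr) * F x + (tr - x) * F y := by
      calc F tr * (y - x) ≤ (a * F x + b * F y) * (y - x) :=
          mul_le_mul_of_nonneg_right hreal hyx.le
        _ = (y - tr) * F x + (tr - x) * F y := by
            rw [ha_def, hb_def]
            field_simp
            try ring
    nlinarith
  set S : Set ℝ := (fun x => (F tr - F x) / (tr - x)) '' (Ico 0 tr) with hS_def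
  have hSne : S.Nonempty := ⟨_, ⟨0, ⟨le_rfl, htrpos⟩, rfl⟩⟩
  by_cases hbdd : BddAbove S
  case neg =>
    apply hinf_case
    intro y hy
    rcases eq_or_ne y ∞ with rfl | hyfin
    · have h1 : t < t + 1 := ENNReal.lt_add_right htfin one_ne_zero
      by_contra hcon
      have h2 : Φ (t+1) ≤ Φ ∞ := hΦ le_top
      have h3 : Φ (t + 1) = ∞ := by
        by_contra hcon2
        apply hbdd
        refine ⟨(F (t+1).toReal - F tr) / ((t+1).toReal - tr), ?_⟩
        rintro σ' ⟨x, ⟨hx0, hxtr⟩, rfl⟩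
        have htr1 : tr < (t+1).toReal := by
          rw [ENNReal.toReal_add htfin one_ne_top]
          simp [htr_def]
        apply hF3 x (t+1).toReal hx0 hxtr htr1
        rwa [ENNReal.ofReal_toReal (by simp [htfin])]
      exact hcon (eq_top_iff.2 (h3 ▸ h2))
    · by_contra hcon
      apply hbdd
      refine ⟨(F y.toReal - F tr) / (y.toReal - tr), ?_⟩
      rintro σ' ⟨x, ⟨hx0, hxtr⟩, rfl⟩
      have htry : tr < y.toReal := (ENNReal.toReal_lt_toReal htfin hyfin).2 hy
      apply hF3 x y.toReal hx0 hxtr htry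
      rwa [ENNReal.ofReal_toReal hyfin]
  case pos =>
    set σ : ℝ := sSup S with hσ_def
    have hσ0 : 0 ≤ σ := by
      have h0 : (F tr - F 0) / (tr - 0) ∈ S := ⟨0, ⟨le_rfl, htrpos⟩, rfl⟩
      exact le_trans (hslope_nonneg 0 le_rfl htrpos) (le_csSup hbdd h0)
    set s : ℝ≥0∞ := ENNReal.ofReal σ with hs_def
    have hsfin : s ≠ ∞ := ENNReal.ofReal_ne_top
    have hsupport : ∀ y : ℝ≥0∞, Φ t + s * y ≤ Φ y + s * t := by
      intro y
      by_cases hΦy : Φ y = ∞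
      · rw [hΦy]
        exact le_trans le_top (le_add_right le_rfl)
      rcases eq_or_ne y ∞ with rfl | hyfin
      · rcases eq_or_lt_of_le hσ0 with hσz | hσp
        · rw [hs_def, ← hσz, ENNReal.ofReal_zero, zero_mul, zero_mul, add_zero, add_zero]
          exact hΦ le_top
        · exfalso
          obtain ⟨σ', hσ'S, hσ'pos⟩ : ∃ σ' ∈ S, 0 < σ' := by
            by_contra hcon
            push_neg at hcon
            have : σ ≤ 0 := csSup_le hSne fun σ' h => hcon σ' h
            linarith
          obtain ⟨x, ⟨hx0, hxtr⟩, rfl⟩ := hσ'S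
          have hFx : F x < F tr := by
            by_contra hcon
            push_neg at hcon
            have : (F tr - F x) / (tr - x) ≤ 0 :=
              div_nonpos_of_nonpos_of_nonneg (by linarith) (by linarith)
            linarith
          have hx1 : Φ (ENNReal.ofReal x) ≠ ∞ := hFmono x hxtr.le
          have hΦx : Φ (ENNReal.ofReal x) < Φ t := by
            rcases lt_or_ge (Φ (ENNReal.ofReal x)) (Φ t) with h | h
            · exact h
            · exfalso
              have hle := (ENNReal.toReal_le_toReal hΦt hx1).2 h
              have hFx' : (Φ (ENNReal.ofReal x)).toReal < (Φ (ENNReal.ofReal tr)).toReal := hFx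
              rw [hFt] at hFx'
              linarith
          have hxlt : ENNReal.ofReal x < t := by
            rw [← hFt]
            exact (ENNReal.ofReal_lt_ofReal_iff htrpos).2 hxtr
          exact hΦy (phi_top Φ hΦ hconv (ENNReal.ofReal x) t hxlt hΦx hΦt htfin)
      · set yr := y.toReal with hyr_def
        have hyeq : ENNReal.ofReal yr = y := ENNReal.ofReal_toReal hyfin
        have hyr0 : 0 ≤ yr := ENNReal.toReal_nonneg
        have hexp : ∀ (A : ℝ≥0∞), A ≠ ∞ → ∀ z : ℝ, 0 ≤ z →
            A + s * ENNReal.ofReal z = ENNReal.ofReal (A.toReal + σ * z) := by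
          intro A hA z hz
          rw [ENNReal.ofReal_add ENNReal.toReal_nonneg (mul_nonneg hσ0 hz),
            ENNReal.ofReal_toReal hA, ENNReal.ofReal_mul hσ0, hs_def]
        have hFtr' : F tr = (Φ t).toReal := by
          show (Φ (ENNReal.ofReal tr)).toReal = (Φ t).toReal
          rw [hFt]
        have hFyr' : F yr = (Φ y).toReal := by
          show (Φ (ENNReal.ofReal yr)).toReal = (Φ y).toReal
          rw [hyeq]
        rcases le_or_gt y t with hyt | hty
        · have hreal : (Φ t).toReal + σ * yr ≤ (Φ y).toReal + σ * tr := by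
            rcases eq_or_lt_of_le hyt with rfl | hylt
            · simp [hyr_def, htr_def]
            · have hyrtr : yr < tr := (ENNReal.toReal_lt_toReal hyfin htfin).2 hylt
              have hslope : (F tr - F yr) / (tr - yr) ≤ σ :=
                le_csSup hbdd ⟨yr, ⟨hyr0, hyrtr⟩, rfl⟩
              have h2 : F tr - F yr ≤ σ * (tr - yr) := by
                rw [div_le_iff₀ (by linarith)] at hslope
                linarith
              rw [hFyr', hFtr'] at h2
              nlinarith
          calc Φ t + s * y = ENNReal.ofReal ((Φ t).toReal + σ * yr) := by
                rw [← hyeq]; exact hexp (Φ t) hΦt yr hyr0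
            _ ≤ ENNReal.ofReal ((Φ y).toReal + σ * tr) := ENNReal.ofReal_le_ofReal hreal
            _ = Φ y + s * t := by
                rw [← hFt]; exact (hexp (Φ y) hΦy tr htrpos.le).symm
        · have htryr : tr < yr := (ENNReal.toReal_lt_toReal htfin hyfin).2 hty
          have hσle : σ ≤ (F yr - F tr) / (yr - tr) := by
            apply csSup_le hSne
            rintro σ' ⟨x, ⟨hx0, hxtr⟩, rfl⟩
            apply hF3 x yr hx0 hxtr htryr
            rw [hyeq]; exact hΦy
          have hreal : (Φ t).toReal + σ * yr ≤ (Φ y).toReal + σ * tr := by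
            have h2 : σ * (yr - tr) ≤ F yr - F tr := (le_div_iff₀ (by linarith)).1 hσle
            rw [hFyr', hFtr'] at h2
            nlinarith
          calc Φ t + s * y = ENNReal.ofReal ((Φ t).toReal + σ * yr) := by
                rw [← hyeq]; exact hexp (Φ t) hΦt yr hyr0
            _ ≤ ENNReal.ofReal ((Φ y).toReal + σ * tr) := ENNReal.ofReal_le_ofReal hreal
            _ = Φ y + s * t := by
                rw [← hFt]; exact (hexp (Φ y) hΦy tr htrpos.le).symm
    have hint : Φ t + s * ∫⁻ a, f a ∂μ ≤ (∫⁻ a, Φ (f a) ∂μ) + s * t := by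
      calc Φ t + s * ∫⁻ a, f a ∂μ
          = ∫⁻ a, Φ t + s * f a ∂μ := by
            rw [lintegral_add_left measurable_const, lintegral_const_mul _ hf,
              lintegral_const, measure_univ, mul_one]
        _ ≤ ∫⁻ a, Φ (f a) + s * t ∂μ := lintegral_mono fun a => hsupport (f a)
        _ = (∫⁻ a, Φ (f a) ∂μ) + s * t := by
            rw [lintegral_add_right _ measurable_const, lintegral_const, measure_univ, mul_one]
    have hst : s * t ≠ ∞ := ENNReal.mul_ne_top hsfin htfin
    have h2 : Φ t + s * t ≤ (∫⁻ a, Φ (f a) ∂μ) + s * t := by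
      calc Φ t + s * t ≤ Φ t + s * ∫⁻ a, f a ∂μ :=
            add_le_add_right (mul_le_mul_right ht.le _) _
        _ ≤ (∫⁻ a, Φ (f a) ∂μ) + s * t := hint
    exact (ENNReal.add_le_add_iff_right hst).1 h2

end Jensen



lemma incInv_mono (Φ : ℝ≥0∞ → ℝ≥0∞) : Monotone (incInv Φ) := by
  intro a b hab
  apply sInf_le_sInf
  intro x hx
  exact hab.trans hx


lemma layer (ψ : ℝ → ℝ≥0∞) (hψ : Measurable ψ) :
    ∫⁻ u in Ioo (0:ℝ) 1, (ENNReal.ofReal u)⁻¹ * (ψ u)⁻¹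
      = ∫⁻ t in Ioi (0:ℝ),
          ∫⁻ u in Ioo (0:ℝ) 1 ∩ {u | ENNReal.ofReal t < (ψ u)⁻¹}, (ENNReal.ofReal u)⁻¹ := by
  set A : Set (ℝ × ℝ) := {p | ENNReal.ofReal p.2 < (ψ p.1)⁻¹} with hA_def
  have hA : MeasurableSet A :=
    measurableSet_lt (measurable_ofReal.comp measurable_snd) ((hψ.comp measurable_fst).inv)
  have hswap := lintegral_lintegral_swap (μ := volume.restrict (Ioo (0:ℝ) 1))
    (ν := volume.restrict (Ioi (0:ℝ)))
    (f := fun u t => (ENNReal.ofReal u)⁻¹ * A.indicator 1 (u, t))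
    (((measurable_ofReal.comp measurable_fst).inv.mul
      (measurable_one.indicator hA)).aemeasurable)
  have hleft : ∫⁻ u in Ioo (0:ℝ) 1, ∫⁻ t in Ioi (0:ℝ),
      (ENNReal.ofReal u)⁻¹ * A.indicator 1 (u, t)
      = ∫⁻ u in Ioo (0:ℝ) 1, (ENNReal.ofReal u)⁻¹ * (ψ u)⁻¹ := by
    apply setLIntegral_congr_fun measurableSet_Ioo
    intro u hu
    dsimp only
    have hne : (ENNReal.ofReal u)⁻¹ ≠ ∞ := by
      simp [ENNReal.ofReal_pos.2 hu.1, (ENNReal.ofReal_pos.2 hu.1).ne']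
    rw [lintegral_const_mul' _ _ hne]
    congr 1
    have heq : (fun t => A.indicator 1 (u, t))
        = ({t : ℝ | ENNReal.ofReal t < (ψ u)⁻¹}).indicator (fun _ => (1:ℝ≥0∞)) := by
      funext t
      simp [Set.indicator_apply, hA_def]
    rw [heq]
    have hSu : MeasurableSet {t : ℝ | ENNReal.ofReal t < (ψ u)⁻¹} :=
      measurableSet_lt measurable_ofReal measurable_const
    rw [lintegral_indicator hSu, Measure.restrict_restrict hSu, setLIntegral_one, vol_aux]
  have hright : ∫⁻ t in Ioi (0:ℝ), ∫⁻ u in Ioo (0:ℝ) 1,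
      (ENNReal.ofReal u)⁻¹ * A.indicator 1 (u, t)
      = ∫⁻ t in Ioi (0:ℝ),
          ∫⁻ u in Ioo (0:ℝ) 1 ∩ {u | ENNReal.ofReal t < (ψ u)⁻¹}, (ENNReal.ofReal u)⁻¹ := by
    apply setLIntegral_congr_fun measurableSet_Ioi
    intro t _
    dsimp only
    have heq : (fun u => (ENNReal.ofReal u)⁻¹ * A.indicator 1 (u, t))
        = ({u : ℝ | ENNReal.ofReal t < (ψ u)⁻¹}).indicator (fun u => (ENNReal.ofReal u)⁻¹) := by
      funext u
      by_cases hmem : ENNReal.ofReal t < (ψ u)⁻¹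
      · simp [Set.indicator_apply, hA_def, hmem]
      · simp [Set.indicator_apply, hA_def, hmem]
    have hBu : MeasurableSet {u : ℝ | ENNReal.ofReal t < (ψ u)⁻¹} :=
      measurableSet_lt measurable_const hψ.inv
    rw [heq, lintegral_indicator hBu, Measure.restrict_restrict hBu]
    rw [inter_comm]
  rw [← hleft, hswap, hright]

lemma core (Φ : ℝ≥0∞ → ℝ≥0∞) (hΦ : Monotone Φ) (g G : ℝ → ℝ≥0∞)
    (hg : Measurable g) (hG : Measurable G) (N : ℝ≥0∞) (hN0 : N ≠ 0) (hNt : N ≠ ∞)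
    (hGN : ∫⁻ u in Ioo (0:ℝ) 1, G u ≤ N)
    (hJ : ∀ u ∈ Ioo (0:ℝ) 1, ∀ c' : ℝ≥0∞, c' < g u → Φ c' ≤ G u) :
    ∫⁻ u in Ioo (0:ℝ) 1, (ENNReal.ofReal u * incInv Φ (N / ENNReal.ofReal u))⁻¹
      ≤ ∫⁻ u in Ioo (0:ℝ) 1, (ENNReal.ofReal u * g u)⁻¹ := by
  set U : Set ℝ := Ioo (0:ℝ) 1 with hU_def
  set h₂ : ℝ → ℝ≥0∞ := fun u => incInv Φ (N / ENNReal.ofReal u) with hh₂_def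
  have hh₂anti : Antitone h₂ := by
    intro u v huv
    exact incInv_mono Φ (ENNReal.div_le_div_left (ENNReal.ofReal_le_ofReal huv) N)
  have hh₂m : Measurable h₂ := hh₂anti.measurable
  have hsplitprod : ∀ ψ : ℝ → ℝ≥0∞, ∫⁻ u in U, (ENNReal.ofReal u * ψ u)⁻¹
      = ∫⁻ u in U, (ENNReal.ofReal u)⁻¹ * (ψ u)⁻¹ := by
    intro ψ
    apply setLIntegral_congr_fun measurableSet_Ioo
    intro u hu
    dsimp only
    rw [ENNReal.mul_inv (Or.inl (ENNReal.ofReal_pos.2 hu.1).ne') (Or.inl ENNReal.ofReal_ne_top)]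
  rw [hsplitprod h₂, hsplitprod g, layer h₂ hh₂m, layer g hg]
  apply lintegral_mono_ae
  rw [ae_restrict_iff' measurableSet_Ioi]
  apply Filter.Eventually.of_forall
  intro t ht
  set c := (ENNReal.ofReal t)⁻¹ with hc_def
  have htpos : 0 < ENNReal.ofReal t := ENNReal.ofReal_pos.2 ht
  have hc0 : c ≠ 0 := by simp [hc_def, ENNReal.ofReal_ne_top]
  have hcfin : c ≠ ∞ := by simp [hc_def, htpos.ne']
  have hsetL : {u : ℝ | ENNReal.ofReal t < (h₂ u)⁻¹} = {u : ℝ | h₂ u < c} := by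
    ext u
    exact ENNReal.lt_inv_iff_lt_inv
  have hsetR : {u : ℝ | ENNReal.ofReal t < (g u)⁻¹} = {u : ℝ | g u < c} := by
    ext u
    exact ENNReal.lt_inv_iff_lt_inv
  rw [hsetL, hsetR]
  set E : Set ℝ := U ∩ {u | g u < c} with hE_def
  have hER : MeasurableSet {u : ℝ | g u < c} := measurableSet_lt hg measurable_const
  have hEm : MeasurableSet E := measurableSet_Ioo.inter hER
  -- D = sup of Φ on Iio c
  set D : ℝ≥0∞ := ⨆ c' : Iio c, Φ c'.1 with hD_def
  have hΦleD : ∀ c' : ℝ≥0∞, c' < c → Φ c' ≤ D := by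
    intro c' hc'
    exact le_iSup (fun x : Iio c => Φ x.1) ⟨c', hc'⟩
  -- F1
  have hF1 : ∀ u ∈ U ∩ {u | h₂ u < c}, N ≤ ENNReal.ofReal u * D := by
    rintro u ⟨hU', hlt⟩
    obtain ⟨c', hc'1, hc'2⟩ := exists_between (α := ℝ≥0∞) hlt
    have hN' : N ≤ ENNReal.ofReal u * Φ c' := by
      by_contra hcon
      have hlt2 : Φ c' * ENNReal.ofReal u < N := by
        rw [mul_comm]
        exact lt_of_not_ge hcon
      have hdiv : Φ c' < N / ENNReal.ofReal u :=
        (ENNReal.lt_div_iff_mul_lt (Or.inl (ENNReal.ofReal_pos.2 hU'.1).ne')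
          (Or.inl ENNReal.ofReal_ne_top)).2 hlt2
      have hle : c' ≤ h₂ u := by
        apply le_sInf
        intro b hb
        by_contra hcon2
        have hblt : b < c' := lt_of_not_ge hcon2
        exact absurd (hb.trans (hΦ hblt.le)) (not_le.2 hdiv)
      exact absurd hle (not_le.2 hc'1)
    exact hN'.trans (mul_le_mul_right (hΦleD c' hc'2) _)
  -- F2
  set κ : ℝ≥0∞ := volume (U ∩ {u | c ≤ g u}) with hκ_def
  have hUdiff : U \ E = U ∩ {u | c ≤ g u} := by
    ext u
    simp only [hE_def, mem_diff, mem_inter_iff, mem_setOf_eq, not_and, not_lt]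
    constructor
    · rintro ⟨hu, hv⟩
      exact ⟨hu, hv hu⟩
    · rintro ⟨hu, hv⟩
      exact ⟨hu, fun _ => hv⟩
  have hF2 : D * κ ≤ N := by
    rw [hD_def, ENNReal.iSup_mul]
    apply iSup_le
    rintro ⟨c', hc'⟩
    have hset : MeasurableSet (U ∩ {u | c ≤ g u}) :=
      measurableSet_Ioo.inter (measurableSet_le measurable_const hg)
    calc Φ c' * κ = ∫⁻ _ in U ∩ {u | c ≤ g u}, Φ c' := (setLIntegral_const _ _).symm
      _ ≤ ∫⁻ u in U ∩ {u | c ≤ g u}, G u :=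
          setLIntegral_mono hG fun u hu => hJ u hu.1 c' (lt_of_lt_of_le hc' hu.2)
      _ ≤ ∫⁻ u in U, G u := lintegral_mono_set inter_subset_left
      _ ≤ N := hGN
  have hκ1 : κ ≤ 1 := by
    calc κ ≤ volume U := measure_mono inter_subset_left
      _ = 1 := by simp [hU_def, Real.volume_Ioo]
  by_cases hD0 : D = 0
  · have hempty : U ∩ {u | h₂ u < c} = ∅ := by
      apply eq_empty_iff_forall_notMem.2
      intro u hu
      have := hF1 u hu
      rw [hD0, mul_zero] at this
      exact hN0 (le_antisymm (le_of_le_of_eq this rfl) (zero_le ..)) 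
    rw [hempty]
    simp
  · have hκND : κ ≤ N / D := by
      apply (ENNReal.le_div_iff_mul_le (Or.inl hD0) (Or.inr hNt)).2
      rw [mul_comm]
      exact hF2
    set V : ℝ≥0∞ := min (N / D) 1 with hV_def
    have hκV : κ ≤ V := le_min hκND hκ1
    have hVfin : V ≠ ∞ := ne_top_of_le_ne_top one_ne_top (min_le_right _ _)
    set w : ℝ := V.toReal with hw_def
    have hofw : ENNReal.ofReal w = V := ENNReal.ofReal_toReal hVfin
    have hw1 : w ≤ 1 := by
      rw [hw_def]
      calc V.toReal ≤ (1:ℝ≥0∞).toReal :=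
            (ENNReal.toReal_le_toReal hVfin one_ne_top).2 (min_le_right _ _)
        _ = 1 := by simp
    by_cases hV0 : V = 0
    · -- κ = 0
      have hκ0 : volume (U \ E) = 0 := by
        rw [hUdiff]
        exact le_antisymm (le_of_le_of_eq (hκV.trans hV0.le) rfl) (zero_le ..)
      have hEU : E =ᵐ[volume] U := by
        rw [ae_eq_set]
        constructor
        · rw [diff_eq_empty.2 inter_subset_left]
          exact measure_empty
        · exact hκ0
      calc ∫⁻ u in U ∩ {u | h₂ u < c}, (ENNReal.ofReal u)⁻¹
          ≤ ∫⁻ u in U, (ENNReal.ofReal u)⁻¹ := lintegral_mono_set inter_subset_left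
        _ = ∫⁻ u in E, (ENNReal.ofReal u)⁻¹ := by
            rw [Measure.restrict_congr_set hEU]
    · have hwpos : 0 < w := ENNReal.toReal_pos hV0 hVfin
      set T : Set ℝ := Ico w 1 with hT_def
      have hsub1 : U ∩ {u | h₂ u < c} ⊆ T := by
        rintro u ⟨hU', hlt⟩
        have hNle := hF1 u ⟨hU', hlt⟩
        have hdivle : N / D ≤ ENNReal.ofReal u :=
          (ENNReal.div_le_iff_le_mul (Or.inl hD0)
            (Or.inr (ENNReal.ofReal_pos.2 hU'.1).ne')).2 hNle
        have hVle : ENNReal.ofReal w ≤ ENNReal.ofReal u := by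
          rw [hofw]
          exact (min_le_left _ _).trans hdivle
        exact ⟨(ENNReal.ofReal_le_ofReal_iff hU'.1.le).1 hVle, hU'.2⟩
      have hsub2 : T ⊆ U := fun u hu => ⟨lt_of_lt_of_le hwpos hu.1, hu.2⟩
      set κ0 : ℝ≥0∞ := volume (Ioo 0 w \ E) with hκ0_def
      set κ1 : ℝ≥0∞ := volume (T \ E) with hκ1_def
      have hTmeas : MeasurableSet T := measurableSet_Ico
      have hκsum : κ0 + κ1 ≤ ENNReal.ofReal w := by
        have hdisj : Disjoint (Ioo 0 w \ E) (T \ E) := by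
          apply Disjoint.mono (diff_subset) (diff_subset)
          apply Set.disjoint_left.2
          intro u hu1 hu2
          exact absurd hu2.1 (not_le.2 hu1.2)
        have hunion : volume ((Ioo 0 w \ E) ∪ (T \ E)) = κ0 + κ1 :=
          measure_union hdisj (hTmeas.diff hEm)
        have hsubU : (Ioo 0 w \ E) ∪ (T \ E) ⊆ U \ E := by
          apply union_subset
          · exact diff_subset_diff_left (fun u hu => ⟨hu.1, lt_of_lt_of_le hu.2 hw1⟩)
          · exact diff_subset_diff_left hsub2
        calc κ0 + κ1 = volume ((Ioo 0 w \ E) ∪ (T \ E)) := hunion.symm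
          _ ≤ volume (U \ E) := measure_mono hsubU
          _ = κ := by rw [hUdiff]
          _ ≤ V := hκV
          _ = ENNReal.ofReal w := hofw.symm
      have hκ0fin : κ0 ≠ ∞ := by
        apply ne_top_of_le_ne_top ENNReal.ofReal_ne_top
        exact le_trans (le_add_right le_rfl) hκsum
      have hκ1le : κ1 ≤ ENNReal.ofReal w - κ0 :=
        (ENNReal.cancel_of_ne hκ0fin).le_tsub_of_add_le_left hκsum
      -- measure of E ∩ Ioo 0 w
      have hEIoo : ENNReal.ofReal w - κ0 ≤ volume (E ∩ Ioo 0 w) := by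
        have hkey := measure_inter_add_diff (μ := volume) (Ioo (0:ℝ) w) hEm
        have hvol : volume (Ioo (0:ℝ) w) = ENNReal.ofReal w := by
          rw [Real.volume_Ioo, sub_zero]
        rw [hvol] at hkey
        rw [inter_comm]
        calc ENNReal.ofReal w - κ0 = (volume (Ioo 0 w ∩ E) + κ0) - κ0 := by rw [hkey]
          _ = volume (Ioo 0 w ∩ E) := ENNReal.add_sub_cancel_right hκ0fin
          _ ≤ volume (Ioo 0 w ∩ E) := le_rfl
      have hwinv : (ENNReal.ofReal w)⁻¹ ≠ ∞ := by
        simp [ENNReal.ofReal_pos.2 hwpos, (ENNReal.ofReal_pos.2 hwpos).ne']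
      -- bound for T \ E
      have hbound1 : ∫⁻ u in T \ E, (ENNReal.ofReal u)⁻¹ ≤ (ENNReal.ofReal w)⁻¹ * κ1 := by
        calc ∫⁻ u in T \ E, (ENNReal.ofReal u)⁻¹
            ≤ ∫⁻ _ in T \ E, (ENNReal.ofReal w)⁻¹ := by
              apply setLIntegral_mono measurable_const
              intro u hu
              exact ENNReal.inv_le_inv' (ENNReal.ofReal_le_ofReal hu.1.1)
          _ = (ENNReal.ofReal w)⁻¹ * κ1 := setLIntegral_const _ _
      -- bound for E ∩ Ioo 0 w
      have hbound2 : (ENNReal.ofReal w)⁻¹ * (ENNReal.ofReal w - κ0)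
          ≤ ∫⁻ u in E ∩ Ioo 0 w, (ENNReal.ofReal u)⁻¹ := by
        calc (ENNReal.ofReal w)⁻¹ * (ENNReal.ofReal w - κ0)
            ≤ (ENNReal.ofReal w)⁻¹ * volume (E ∩ Ioo 0 w) := mul_le_mul_right hEIoo _
          _ = ∫⁻ _ in E ∩ Ioo 0 w, (ENNReal.ofReal w)⁻¹ := (setLIntegral_const _ _).symm
          _ ≤ ∫⁻ u in E ∩ Ioo 0 w, (ENNReal.ofReal u)⁻¹ := by
              apply setLIntegral_mono (measurable_ofReal.inv)
              intro u hu
              exact ENNReal.inv_le_inv' (ENNReal.ofReal_le_ofReal hu.2.2.le)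
      -- assemble
      have hchain : ∫⁻ u in T \ E, (ENNReal.ofReal u)⁻¹
          ≤ ∫⁻ u in E \ T, (ENNReal.ofReal u)⁻¹ := by
        have hsubET : E ∩ Ioo 0 w ⊆ E \ T := by
          rintro u ⟨hu1, hu2⟩
          exact ⟨hu1, fun hT => absurd hT.1 (not_le.2 hu2.2)⟩
        calc ∫⁻ u in T \ E, (ENNReal.ofReal u)⁻¹
            ≤ (ENNReal.ofReal w)⁻¹ * κ1 := hbound1
          _ ≤ (ENNReal.ofReal w)⁻¹ * (ENNReal.ofReal w - κ0) := mul_le_mul_right hκ1le _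
          _ ≤ ∫⁻ u in E ∩ Ioo 0 w, (ENNReal.ofReal u)⁻¹ := hbound2
          _ ≤ ∫⁻ u in E \ T, (ENNReal.ofReal u)⁻¹ := lintegral_mono_set hsubET
      have hsplitT := lintegral_inter_add_diff (μ := volume)
        (fun u => (ENNReal.ofReal u)⁻¹) T hEm
      have hsplitE := lintegral_inter_add_diff (μ := volume)
        (fun u => (ENNReal.ofReal u)⁻¹) E hTmeas
      calc ∫⁻ u in U ∩ {u | h₂ u < c}, (ENNReal.ofReal u)⁻¹
          ≤ ∫⁻ u in T, (ENNReal.ofReal u)⁻¹ := lintegral_mono_set hsub1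
        _ = (∫⁻ u in T ∩ E, (ENNReal.ofReal u)⁻¹) + ∫⁻ u in T \ E, (ENNReal.ofReal u)⁻¹ :=
            hsplitT.symm
        _ ≤ (∫⁻ u in E ∩ T, (ENNReal.ofReal u)⁻¹) + ∫⁻ u in E \ T, (ENNReal.ofReal u)⁻¹ := by
            rw [inter_comm]
            exact add_le_add le_rfl hchain
        _ = ∫⁻ u in E, (ENNReal.ofReal u)⁻¹ := hsplitE








section MainAux

variable (Q : ℂ → ℝ≥0∞) (hQ : Measurable Q)
    (Φ : ℝ≥0∞ → ℝ≥0∞) (hΦ : Monotone Φ)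
    (hconv : ∀ a b t₁ t₂ : ℝ≥0∞, a + b = 1 → Φ (a * t₁ + b * t₂) ≤ a * Φ t₁ + b * Φ t₂)
    (q : ℝ → ℝ≥0∞)
    (hq : ∀ r : ℝ, q r =
      (∫⁻ θ in Ioo (0:ℝ) (2 * π), Q ((r : ℂ) * Complex.exp (θ * Complex.I))) /
        ENNReal.ofReal (2 * π))

lemma sq_image_Ioo : (fun r : ℝ => r ^ 2) '' Ioo 0 1 = Ioo 0 1 := by
  ext x
  constructor
  · rintro ⟨r, hr, rfl⟩
    simp only [mem_Ioo]
    exact ⟨pow_pos hr.1 2, by nlinarith [hr.1, hr.2]⟩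
  · intro hx
    refine ⟨Real.sqrt x, ⟨Real.sqrt_pos.2 hx.1, ?_⟩, Real.sq_sqrt hx.1.le⟩
    rw [show (1:ℝ) = Real.sqrt 1 by simp]
    exact Real.sqrt_lt_sqrt hx.1.le hx.2

lemma sq_hasDeriv : ∀ r ∈ Ioo (0:ℝ) 1,
    HasDerivWithinAt (fun r : ℝ => r ^ 2) (2 * r) (Ioo 0 1) r := by
  intro r _
  simpa using (hasDerivAt_pow 2 r).hasDerivWithinAt

lemma sq_injOn : InjOn (fun r : ℝ => r ^ 2) (Ioo 0 1) := by
  intro a ha b hb h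
  simp only at h
  nlinarith [ha.1, hb.1]

include hQ hΦ hconv hq in
theorem main_aux (N' : ℝ≥0∞) (h0 : N' ≠ 0) (htop : N' ≠ ∞)
    (hle : (∫⁻ z in Metric.ball (0:ℂ) 1, Φ (Q z)) ≤ N') :
    2⁻¹ * ∫⁻ τ in Ioi N'.toReal, (ENNReal.ofReal τ * incInv Φ (ENNReal.ofReal τ))⁻¹
      ≤ ∫⁻ r in Ioo (0:ℝ) 1, (ENNReal.ofReal r * q r)⁻¹ := by
  have hπ : (0:ℝ) < 2 * π := by positivity
  set A : ℝ := N'.toReal with hA_def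
  have hApos : 0 < A := ENNReal.toReal_pos h0 htop
  have hofA : ENNReal.ofReal A = N' := ENNReal.ofReal_toReal htop
  -- measurability of θ ↦ r e^{iθ} type maps
  have hcirc : ∀ r : ℝ, Measurable fun θ : ℝ => (r : ℂ) * Complex.exp ((θ:ℂ) * Complex.I) :=
    fun r => measurable_const.mul
      (Complex.measurable_exp.comp (Complex.measurable_ofReal.mul measurable_const))
  have huncurry : Measurable
      (Function.uncurry fun (r θ : ℝ) => Q ((r : ℂ) * Complex.exp ((θ:ℂ) * Complex.I))) :=
    hQ.comp ((Complex.measurable_ofReal.comp measurable_fst).mul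
      (Complex.measurable_exp.comp ((Complex.measurable_ofReal.comp measurable_snd).mul
        measurable_const)))
  have huncurryΦ : Measurable
      (Function.uncurry fun (r θ : ℝ) => Φ (Q ((r : ℂ) * Complex.exp ((θ:ℂ) * Complex.I)))) :=
    hΦ.measurable.comp (hQ.comp ((Complex.measurable_ofReal.comp measurable_fst).mul
      (Complex.measurable_exp.comp ((Complex.measurable_ofReal.comp measurable_snd).mul
        measurable_const))))
  have hqm : Measurable q := by
    have hqeq : q = fun r : ℝ =>
        (∫⁻ θ in Ioo (0:ℝ) (2 * π), Q ((r : ℂ) * Complex.exp ((θ:ℂ) * Complex.I)))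
          * (ENNReal.ofReal (2 * π))⁻¹ := by
      funext r
      rw [hq r, div_eq_mul_inv]
    rw [hqeq]
    exact (Measurable.lintegral_prod_right huncurry).mul measurable_const
  -- circle integral of Φ ∘ Q
  set P : ℝ → ℝ≥0∞ :=
    fun r => ∫⁻ θ in Ioo (0:ℝ) (2 * π), Φ (Q ((r : ℂ) * Complex.exp (θ * Complex.I)))
    with hP_def
  have hPm : Measurable P := Measurable.lintegral_prod_right huncurryΦ
  have hpolar : ∫⁻ r in Ioo (0:ℝ) 1, ENNReal.ofReal r * P r ≤ N' := by
    rw [hP_def]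
    calc ∫⁻ r in Ioo (0:ℝ) 1, ENNReal.ofReal r *
          ∫⁻ θ in Ioo (0:ℝ) (2 * π), Φ (Q ((r : ℂ) * Complex.exp (θ * Complex.I)))
        = ∫⁻ z in Metric.ball (0:ℂ) 1, Φ (Q z) := polar_ball _ (hΦ.measurable.comp hQ)
      _ ≤ N' := hle
  -- G : averaged Φ∘Q on circle of radius √u
  set G : ℝ → ℝ≥0∞ := fun u => (ENNReal.ofReal (2 * π))⁻¹ * P (Real.sqrt u) with hG_def
  have hGm : Measurable G :=
    measurable_const.mul (hPm.comp Real.continuous_sqrt.measurable)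
  have h2π0 : ENNReal.ofReal (2 * π) ≠ 0 := (ENNReal.ofReal_pos.2 hπ).ne'
  have hGN : ∫⁻ u in Ioo (0:ℝ) 1, G u ≤ N' := by
    have himg := lintegral_image_eq_lintegral_abs_deriv_smul' measurableSet_Ioo
      sq_hasDeriv sq_injOn G
    rw [sq_image_Ioo] at himg
    rw [himg]
    have hpt : ∀ r ∈ Ioo (0:ℝ) 1,
        ENNReal.ofReal |2 * r| * G (r ^ 2) ≤ ENNReal.ofReal r * P r := by
      intro r hr
      have hsq : Real.sqrt (r ^ 2) = r := Real.sqrt_sq hr.1.le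
      rw [hG_def]
      simp only []
      rw [hsq, abs_of_pos (by linarith [hr.1])]
      have h2r : ENNReal.ofReal (2 * r) = 2 * ENNReal.ofReal r := by
        rw [ENNReal.ofReal_mul (by norm_num)]
        norm_num
      have h2π : (ENNReal.ofReal (2 * π))⁻¹ = 2⁻¹ * (ENNReal.ofReal π)⁻¹ := by
        rw [ENNReal.ofReal_mul (by norm_num), ENNReal.mul_inv (Or.inl (by norm_num))
          (Or.inl (by norm_num))]
        norm_num
      rw [h2r, h2π]
      calc 2 * ENNReal.ofReal r * (2⁻¹ * (ENNReal.ofReal π)⁻¹ * P r)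
          = (2 * 2⁻¹) * (ENNReal.ofReal r * ((ENNReal.ofReal π)⁻¹ * P r)) := by ring
        _ = ENNReal.ofReal r * ((ENNReal.ofReal π)⁻¹ * P r) := by
            rw [ENNReal.mul_inv_cancel (by norm_num) (by norm_num), one_mul]
        _ ≤ ENNReal.ofReal r * (1 * P r) := by
            apply mul_le_mul_right
            apply mul_le_mul_left
            apply ENNReal.inv_le_one.2
            rw [← ENNReal.ofReal_one]
            exact ENNReal.ofReal_le_ofReal (by linarith [Real.pi_gt_three])
        _ = ENNReal.ofReal r * P r := by rw [one_mul]
    calc ∫⁻ r in Ioo (0:ℝ) 1, ENNReal.ofReal |2 * r| * G (r ^ 2)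
        ≤ ∫⁻ r in Ioo (0:ℝ) 1, ENNReal.ofReal r * P r := by
          apply lintegral_mono_ae
          rw [ae_restrict_iff' measurableSet_Ioo]
          exact Filter.Eventually.of_forall hpt
      _ ≤ N' := hpolar
  -- Jensen
  have hJen : ∀ u ∈ Ioo (0:ℝ) 1, ∀ c' : ℝ≥0∞, c' < q (Real.sqrt u) → Φ c' ≤ G u := by
    intro u hu c' hc'
    set μ : Measure ℝ := (ENNReal.ofReal (2 * π))⁻¹ • volume.restrict (Ioo (0:ℝ) (2 * π))
      with hμ_def
    haveI : IsProbabilityMeasure μ := by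
      constructor
      rw [hμ_def, Measure.smul_apply, smul_eq_mul, Measure.restrict_apply MeasurableSet.univ,
        univ_inter, Real.volume_Ioo, sub_zero]
      exact ENNReal.inv_mul_cancel h2π0 ENNReal.ofReal_ne_top
    set r : ℝ := Real.sqrt u with hr_def
    have hf : Measurable fun θ : ℝ => Q ((r : ℂ) * Complex.exp ((θ:ℂ) * Complex.I)) :=
      hQ.comp (hcirc r)
    have hqr : q r = ∫⁻ θ, Q ((r : ℂ) * Complex.exp ((θ:ℂ) * Complex.I)) ∂μ := by
      rw [hμ_def, lintegral_smul_measure, hq r, div_eq_mul_inv, mul_comm, smul_eq_mul]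
    have hGr : G u = ∫⁻ θ, Φ (Q ((r : ℂ) * Complex.exp ((θ:ℂ) * Complex.I))) ∂μ := by
      rw [hμ_def, lintegral_smul_measure, hG_def, smul_eq_mul]
    rw [hGr]
    apply jensen_side Φ hΦ hconv μ _ hf c'
    rw [← hqr]
    exact hc'
  -- apply core
  have hcore := core Φ hΦ (fun u => q (Real.sqrt u)) G
    (hqm.comp Real.continuous_sqrt.measurable) hGm N' h0 htop hGN hJen
  -- RHS substitution
  have hRHS : ∫⁻ u in Ioo (0:ℝ) 1, (ENNReal.ofReal u * q (Real.sqrt u))⁻¹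
      = 2 * ∫⁻ r in Ioo (0:ℝ) 1, (ENNReal.ofReal r * q r)⁻¹ := by
    have himg := lintegral_image_eq_lintegral_abs_deriv_smul' measurableSet_Ioo
      sq_hasDeriv sq_injOn (fun u => (ENNReal.ofReal u * q (Real.sqrt u))⁻¹)
    rw [sq_image_Ioo] at himg
    rw [himg, ← lintegral_const_mul (f := fun r => (ENNReal.ofReal r * q r)⁻¹) _
      ((measurable_ofReal.mul hqm).inv)]
    apply setLIntegral_congr_fun measurableSet_Ioo
    intro r hr
    dsimp only
    have hrpos := hr.1
    have hsq : Real.sqrt (r ^ 2) = r := Real.sqrt_sq hrpos.le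
    rw [hsq, abs_of_pos (by linarith)]
    have hofr0 : ENNReal.ofReal r ≠ 0 := (ENNReal.ofReal_pos.2 hrpos).ne'
    have h2r : ENNReal.ofReal (2 * r) = 2 * ENNReal.ofReal r := by
      rw [ENNReal.ofReal_mul (by norm_num)]
      norm_num
    have hr2 : ENNReal.ofReal (r ^ 2) = ENNReal.ofReal r * ENNReal.ofReal r := by
      rw [← ENNReal.ofReal_mul hrpos.le]
      ring_nf
    rw [h2r, hr2]
    rw [ENNReal.mul_inv (Or.inl (by exact mul_ne_zero hofr0 hofr0))
      (Or.inl (ENNReal.mul_ne_top ENNReal.ofReal_ne_top ENNReal.ofReal_ne_top)),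
      ENNReal.mul_inv (Or.inl hofr0) (Or.inl ENNReal.ofReal_ne_top)]
    calc 2 * ENNReal.ofReal r * ((ENNReal.ofReal r)⁻¹ * (ENNReal.ofReal r)⁻¹ * (q r)⁻¹)
        = 2 * (ENNReal.ofReal r * (ENNReal.ofReal r)⁻¹) * ((ENNReal.ofReal r)⁻¹ * (q r)⁻¹) := by
          ring
      _ = 2 * ((ENNReal.ofReal r)⁻¹ * (q r)⁻¹) := by
          rw [ENNReal.mul_inv_cancel hofr0 ENNReal.ofReal_ne_top, mul_one]
      _ = 2 * (ENNReal.ofReal r * q r)⁻¹ := by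
          rw [ENNReal.mul_inv (Or.inl hofr0) (Or.inl ENNReal.ofReal_ne_top)]
  -- LHS substitution
  have hLHS : ∫⁻ τ in Ioi A, (ENNReal.ofReal τ * incInv Φ (ENNReal.ofReal τ))⁻¹
      = ∫⁻ u in Ioo (0:ℝ) 1, (ENNReal.ofReal u * incInv Φ (N' / ENNReal.ofReal u))⁻¹ := by
    have himg : (fun u : ℝ => A / u) '' Ioo 0 1 = Ioi A := by
      ext τ
      constructor
      · rintro ⟨u, hu, rfl⟩
        have : A < A / u := by
          rw [lt_div_iff₀ hu.1]
          nlinarith [hu.2]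
        exact this
      · intro hτ
        have hτpos : 0 < τ := lt_trans hApos hτ
        refine ⟨A / τ, ⟨by positivity, ?_⟩, by field_simp⟩
        rw [div_lt_one hτpos]
        exact hτ
    have hderiv : ∀ u ∈ Ioo (0:ℝ) 1,
        HasDerivWithinAt (fun u : ℝ => A / u) (A * -(((u:ℝ) ^ 2)⁻¹)) (Ioo 0 1) u := by
      intro u hu
      have heq : (fun u : ℝ => A / u) = fun u : ℝ => A * u⁻¹ := by
        funext x
        rw [div_eq_mul_inv]
      rw [heq]
      exact ((hasDerivAt_inv hu.1.ne').const_mul A).hasDerivWithinAt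
    have hinj : InjOn (fun u : ℝ => A / u) (Ioo 0 1) := by
      intro a ha b hb h
      simp only at h
      field_simp [ha.1.ne', hb.1.ne'] at h
      linarith
    have hsub := lintegral_image_eq_lintegral_abs_deriv_smul' measurableSet_Ioo hderiv hinj
      (fun τ => (ENNReal.ofReal τ * incInv Φ (ENNReal.ofReal τ))⁻¹)
    rw [himg] at hsub
    rw [hsub]
    apply setLIntegral_congr_fun measurableSet_Ioo
    intro u hu
    dsimp only
    have hupos := hu.1
    have hofu0 : ENNReal.ofReal u ≠ 0 := (ENNReal.ofReal_pos.2 hupos).ne'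
    have hAu : ENNReal.ofReal (A / u) = N' / ENNReal.ofReal u := by
      rw [ENNReal.ofReal_div_of_pos hupos, hofA]
    have habs : |A * -(((u:ℝ) ^ 2)⁻¹)| = A / u ^ 2 := by
      rw [abs_of_neg (by
        apply mul_neg_of_pos_of_neg hApos
        simp [hupos.ne']
        positivity)]
      field_simp
    rw [habs]
    have hAu0 : ENNReal.ofReal (A / u) ≠ 0 := by
      apply (ENNReal.ofReal_pos.2 _).ne'
      positivity
    rw [ENNReal.mul_inv (Or.inl hAu0) (Or.inl ENNReal.ofReal_ne_top)]
    have hfrac : ENNReal.ofReal (A / u ^ 2) * (ENNReal.ofReal (A / u))⁻¹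
        = (ENNReal.ofReal u)⁻¹ := by
      rw [← div_eq_mul_inv, ← ENNReal.ofReal_div_of_pos (by positivity)]
      have : A / u ^ 2 / (A / u) = u⁻¹ := by
        field_simp
      rw [this, ENNReal.ofReal_inv_of_pos hupos]
    rw [← mul_assoc, hfrac, hAu,
      ← ENNReal.mul_inv (Or.inl hofu0) (Or.inl ENNReal.ofReal_ne_top)]
  calc 2⁻¹ * ∫⁻ τ in Ioi A, (ENNReal.ofReal τ * incInv Φ (ENNReal.ofReal τ))⁻¹
      = 2⁻¹ * ∫⁻ u in Ioo (0:ℝ) 1,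
          (ENNReal.ofReal u * incInv Φ (N' / ENNReal.ofReal u))⁻¹ := by rw [hLHS]
    _ ≤ 2⁻¹ * ∫⁻ u in Ioo (0:ℝ) 1, (ENNReal.ofReal u * q (Real.sqrt u))⁻¹ :=
        mul_le_mul_right hcore _
    _ = 2⁻¹ * (2 * ∫⁻ r in Ioo (0:ℝ) 1, (ENNReal.ofReal r * q r)⁻¹) := by rw [hRHS]
    _ = ∫⁻ r in Ioo (0:ℝ) 1, (ENNReal.ofReal r * q r)⁻¹ := by
        rw [← mul_assoc, ENNReal.inv_mul_cancel (by norm_num) (by norm_num), one_mul]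

end MainAux

/-- Let `Q : 𝔻 → [0,∞]` be measurable on the unit disk `𝔻 ⊂ ℂ` and
`Φ : [0,∞] → [0,∞]` a non-decreasing convex function.  Let
`q(r) = (1/2π)∫₀^{2π} Q(r e^{iθ}) dθ` be the circular average of `Q` and
`N = ∫_𝔻 Φ(Q(z)) dxdy`.  Then
`∫₀¹ dr/(r q(r)) ≥ (1/2) ∫_N^∞ dτ/(τ Φ⁻¹(τ))`. -/
theorem stmt10 (Q : ℂ → ℝ≥0∞) (hQ : Measurable Q)
    (Φ : ℝ≥0∞ → ℝ≥0∞) (hΦ : Monotone Φ)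
    (hconv : ∀ a b t₁ t₂ : ℝ≥0∞, a + b = 1 → Φ (a * t₁ + b * t₂) ≤ a * Φ t₁ + b * Φ t₂)
    (q : ℝ → ℝ≥0∞)
    (hq : ∀ r : ℝ, q r =
      (∫⁻ θ in Ioo (0:ℝ) (2 * π), Q ((r : ℂ) * Complex.exp (θ * Complex.I))) /
        ENNReal.ofReal (2 * π))
    (N : ℝ≥0∞) (hN : N = ∫⁻ z in Metric.ball (0:ℂ) 1, Φ (Q z)) :
    2⁻¹ * ∫⁻ τ in {τ : ℝ | N < ENNReal.ofReal τ},
        (ENNReal.ofReal τ * incInv Φ (ENNReal.ofReal τ))⁻¹ ≤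
      ∫⁻ r in Ioo (0:ℝ) 1, (ENNReal.ofReal r * q r)⁻¹ := by
  rcases eq_or_ne N ∞ with rfl | hNfin
  · have hempty : {τ : ℝ | (∞:ℝ≥0∞) < ENNReal.ofReal τ} = ∅ := by
      ext τ
      simp [not_top_lt]
    rw [hempty]
    simp
  have hset : {τ : ℝ | N < ENNReal.ofReal τ} = Ioi N.toReal := by
    ext τ
    simp only [mem_setOf_eq, mem_Ioi]
    exact ENNReal.lt_ofReal_iff_toReal_lt hNfin
  rw [hset]
  by_cases hN0 : N = 0
  · -- N = 0 : approximate from the right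
    set f : ℝ → ℝ≥0∞ := fun τ => (ENNReal.ofReal τ * incInv Φ (ENNReal.ofReal τ))⁻¹
      with hf_def
    have hfm : Measurable f := by
      apply Measurable.inv
      apply Monotone.measurable
      intro a b hab
      exact mul_le_mul' (ENNReal.ofReal_le_ofReal hab)
        (incInv_mono Φ (ENNReal.ofReal_le_ofReal hab))
    have hNt0 : N.toReal = 0 := by rw [hN0]; simp
    rw [hNt0]
    have hmono : Monotone fun n : ℕ => (Ioi (1/((n:ℝ)+1))).indicator f := by
      intro n m hnm
      apply Set.indicator_le_indicator_of_subset
      · apply Ioi_subset_Ioi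
        apply one_div_le_one_div_of_le (by positivity)
        exact_mod_cast add_le_add_left (Nat.cast_le.2 hnm) 1
      · exact fun a => zero_le ..
    have hpt : (Ioi (0:ℝ)).indicator f
        = fun τ => ⨆ n : ℕ, (Ioi (1/((n:ℝ)+1))).indicator f τ := by
      funext τ
      rcases le_or_gt τ 0 with hτ | hτ
      · rw [indicator_of_notMem (by simpa using not_lt.2 hτ)]
        symm
        simp only [ENNReal.iSup_eq_zero]
        intro n
        apply indicator_of_notMem
        simp only [mem_Ioi, not_lt]
        calc τ ≤ 0 := hτ
          _ ≤ 1/((n:ℝ)+1) := by positivity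
      · rw [indicator_of_mem (mem_Ioi.2 hτ)]
        obtain ⟨n, hn⟩ := exists_nat_one_div_lt hτ
        apply le_antisymm
        · calc f τ = (Ioi (1/((n:ℝ)+1))).indicator f τ :=
              (indicator_of_mem (mem_Ioi.2 (by exact_mod_cast hn)) f).symm
            _ ≤ ⨆ m : ℕ, (Ioi (1/((m:ℝ)+1))).indicator f τ :=
              le_iSup (fun m : ℕ => (Ioi (1/((m:ℝ)+1))).indicator f τ) n
        · apply iSup_le
          intro m
          exact Set.indicator_le_self' (fun x _ => zero_le ..) τ
    have hssup : ∫⁻ τ in Ioi (0:ℝ), f τ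
        = ⨆ n : ℕ, ∫⁻ τ in Ioi (1/((n:ℝ)+1)), f τ := by
      calc ∫⁻ τ in Ioi (0:ℝ), f τ = ∫⁻ τ, (Ioi (0:ℝ)).indicator f τ :=
            (lintegral_indicator measurableSet_Ioi f).symm
        _ = ∫⁻ τ, ⨆ n : ℕ, (Ioi (1/((n:ℝ)+1))).indicator f τ := by rw [hpt]
        _ = ⨆ n : ℕ, ∫⁻ τ, (Ioi (1/((n:ℝ)+1))).indicator f τ :=
            lintegral_iSup (fun n => hfm.indicator measurableSet_Ioi) hmono
        _ = ⨆ n : ℕ, ∫⁻ τ in Ioi (1/((n:ℝ)+1)), f τ := by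
            congr 1
            funext n
            rw [lintegral_indicator measurableSet_Ioi]
    rw [hssup, ENNReal.mul_iSup]
    apply iSup_le
    intro n
    have hpos : 0 < 1/((n:ℝ)+1) := by positivity
    have := main_aux Q hQ Φ hΦ hconv q hq (ENNReal.ofReal (1/((n:ℝ)+1)))
      (ENNReal.ofReal_pos.2 hpos).ne' ENNReal.ofReal_ne_top
      ((hN.symm.trans hN0).le.trans (zero_le ..))
    rwa [ENNReal.toReal_ofReal hpos.le] at this
  · exact main_aux Q hQ Φ hΦ hconv q hq N hN0 hNfin (le_of_eq hN.symm)
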